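/- Let σ : [0,1] → [0,1] be an invertible bimeasurable map with σ'(t) ∈ {b·a^k : k ∈ ℤ} for a.e. t (some fixed b > 0, a > 1), let p ≥ 1, |h(t)|^p = σ'(t) a.e., and let ψ(x) = x^p·ψ̃(x) be an Orlicz function with ψ̃(a^{1/p}x) = ψ̃(x) for all x > 0. Then for every measurable f on [0,1], ‖h·(f∘σ)‖_ψ = ‖f‖_{ψ₁}, where ψ₁(x) = (1/b)·ψ(b^{1/p}x). -/

import Mathlib

open MeasureTheory Set

/-- The Luxemburg norm on `[0,1]` associated with an Orlicz function `ψ`. -/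
noncomputable def luxNorm (ψ : ℝ → ℝ) (f : ℝ → ℝ) : ℝ :=
  sInf {c : ℝ | 0 < c ∧ ∫ x in Icc (0:ℝ) 1, ψ (|f x| / c) ≤ 1}

/-- let `σ` be an invertible bimeasurable map of `[0,1]` whose
Radon–Nikodym derivative `σ'` takes values in `{b·a^k : k ∈ ℤ}` a.e., let `p ≥ 1`,
`|h|^p = σ'` a.e., and let `ψ(x) = x^p ψ̃(x)` be an Orlicz function with
`ψ̃(a^{1/p} x) = ψ̃(x)`. Then `‖h·(f∘σ)‖_ψ = ‖f‖_{ψ₁}` for every measurable `f`,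
where `ψ₁(x) = (1/b) ψ(b^{1/p} x)`. -/
theorem stmt_19 (σ σinv sd h : ℝ → ℝ) (a b p : ℝ)
    (ha : 1 < a) (hb : 0 < b) (hp : 1 ≤ p)
    (hσmeas : Measurable σ) (hσinvmeas : Measurable σinv) (hhmeas : Measurable h)
    (hmaps : MapsTo σ (Icc (0:ℝ) 1) (Icc (0:ℝ) 1))
    (hinv1 : ∀ t ∈ Icc (0:ℝ) 1, σinv (σ t) = t)
    (hinv2 : ∀ t ∈ Icc (0:ℝ) 1, σ (σinv t) = t)
    -- `sd = σ'` is the Radon–Nikodym derivative of `σ`: change of variables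
    (hcv : ∀ g : ℝ → ℝ, Measurable g →
      ∫ t in Icc (0:ℝ) 1, g (σ t) * sd t = ∫ u in Icc (0:ℝ) 1, g u)
    (hsd : ∀ᵐ t ∂(volume.restrict (Icc (0:ℝ) 1)), ∃ k : ℤ, sd t = b * a ^ k)
    (hh : ∀ᵐ t ∂(volume.restrict (Icc (0:ℝ) 1)), |h t| ^ p = sd t)
    (ψ ψt : ℝ → ℝ)
    (hψconv : ConvexOn ℝ (Ici 0) ψ) (hψmono : MonotoneOn ψ (Ici 0)) (hψ0 : ψ 0 = 0)
    (hψ : ∀ x : ℝ, 0 < x → ψ x = x ^ p * ψt x)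
    (hper : ∀ x : ℝ, 0 < x → ψt (a ^ (1/p) * x) = ψt x) :
    ∀ f : ℝ → ℝ, Measurable f →
      luxNorm ψ (fun t => h t * f (σ t)) =
      luxNorm (fun x => (1/b) * ψ (b ^ (1/p) * x)) f := by
  intro f hfmeas
  have hp0 : p ≠ 0 := by positivity
  have ha0 : (0:ℝ) < a := by linarith
  have hq : (0:ℝ) < a ^ (1/p) := Real.rpow_pos_of_pos ha0 _
  have hbq : (0:ℝ) < b ^ (1/p) := Real.rpow_pos_of_pos hb _
  have hbp : (b ^ (1/p)) ^ p = b := by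
    rw [one_div]; exact Real.rpow_inv_rpow hb.le hp0
  -- periodicity under inverse
  have hper' : ∀ x : ℝ, 0 < x → ψt ((a ^ (1/p))⁻¹ * x) = ψt x := by
    intro x hx
    have := hper ((a ^ (1/p))⁻¹ * x) (by positivity)
    rw [← mul_assoc, mul_inv_cancel₀ (ne_of_gt hq), one_mul] at this
    exact this.symm
  have hperk : ∀ k : ℤ, ∀ x : ℝ, 0 < x → ψt ((a ^ (1/p)) ^ k * x) = ψt x := by
    intro k
    induction k using Int.induction_on with
    | zero => intro x hx; simp
    | succ n ih =>
      intro x hx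
      have h1 : (a ^ (1/p)) ^ ((n:ℤ) + 1) * x = a ^ (1/p) * ((a ^ (1/p)) ^ (n:ℤ) * x) := by
        rw [zpow_add_one₀ (ne_of_gt hq)]; ring
      rw [h1, hper _ (by positivity), ih x hx]
    | pred n ih =>
      intro x hx
      have h1 : (a ^ (1/p)) ^ (-(n:ℤ) - 1) * x = (a ^ (1/p))⁻¹ * ((a ^ (1/p)) ^ (-(n:ℤ)) * x) := by
        rw [zpow_sub_one₀ (ne_of_gt hq)]; ring
      rw [h1, hper' _ (by positivity), ih x hx]
  -- the key integral identity
  have key : ∀ c : ℝ, 0 < c →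
      (∫ t in Icc (0:ℝ) 1, ψ (|h t * f (σ t)| / c))
        = ∫ u in Icc (0:ℝ) 1, (1/b) * ψ (b ^ (1/p) * (|f u| / c)) := by
    intro c hc
    set g : ℝ → ℝ := fun u => (1/b) * ψ (b ^ (1/p) * (|f u| / c)) with hg
    have hgmeas : Measurable g := by
      set F : ℝ → ℝ := fun y => ψ (max y 0) with hF
      have hFmono : Monotone F := fun y₁ y₂ hy =>
        hψmono (mem_Ici.mpr (le_max_right _ _)) (mem_Ici.mpr (le_max_right _ _)) (max_le_max hy le_rfl)
      have hgF : g = fun u => (1/b) * F (b ^ (1/p) * (|f u| / c)) := by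
        funext u
        have hnn : 0 ≤ b ^ (1/p) * (|f u| / c) := by positivity
        have hmx : (b ^ (1/p) * (|f u| / c)) ⊔ 0 = b ^ (1/p) * (|f u| / c) :=
          max_eq_left hnn
        simp only [hg, hF, hmx]
      rw [hgF]
      exact measurable_const.mul
        (hFmono.measurable.comp ((measurable_const.mul (hfmeas.abs.div_const c))))
    have hae : (fun t => ψ (|h t * f (σ t)| / c))
        =ᵐ[volume.restrict (Icc (0:ℝ) 1)] fun t => g (σ t) * sd t := by
      filter_upwards [hsd, hh] with t ⟨k, hk⟩ hht
      have hsd0 : 0 < sd t := by rw [hk]; positivity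
      have hh0 : 0 < |h t| := by
        by_contra hcon
        push_neg at hcon
        have : |h t| = 0 := le_antisymm hcon (abs_nonneg _)
        rw [this, Real.zero_rpow hp0] at hht
        linarith
      -- |h t| = b^(1/p) * (a^(1/p))^k
      have habs : |h t| = b ^ (1/p) * (a ^ (1/p)) ^ k := by
        have h1 : |h t| = (sd t) ^ (1/p) := by
          rw [← hht, one_div, Real.rpow_rpow_inv (abs_nonneg _) hp0]
        rw [h1, hk, Real.mul_rpow hb.le (by positivity)]
        congr 1
        rw [← Real.rpow_intCast a k, ← Real.rpow_intCast (a ^ (1/p)) k,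
          ← Real.rpow_mul ha0.le, ← Real.rpow_mul ha0.le, mul_comm]
      by_cases hf0 : f (σ t) = 0
      · simp [hf0, hψ0, hg, hb.ne']
      · have hy : 0 < |f (σ t)| / c := div_pos (abs_pos.mpr hf0) hc
        set y := |f (σ t)| / c with hydef
        have harg : |h t * f (σ t)| / c = |h t| * y := by
          rw [abs_mul, hydef]; ring
        have hby : 0 < b ^ (1/p) * y := by positivity
        have e1 : ψ (|h t| * y) = (|h t| * y) ^ p * ψt (|h t| * y) :=
          hψ _ (mul_pos hh0 hy)
        have e2 : ψt (|h t| * y) = ψt (b ^ (1/p) * y) := by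
          have : |h t| * y = (a ^ (1/p)) ^ k * (b ^ (1/p) * y) := by rw [habs]; ring
          rw [this, hperk k _ hby]
        have e3 : (|h t| * y) ^ p = sd t * y ^ p := by
          rw [Real.mul_rpow (abs_nonneg _) (le_of_lt hy), hht]
        have e4 : ψ (b ^ (1/p) * y) = (b ^ (1/p) * y) ^ p * ψt (b ^ (1/p) * y) :=
          hψ _ hby
        have e5 : (b ^ (1/p) * y) ^ p = b * y ^ p := by
          rw [Real.mul_rpow hbq.le (le_of_lt hy), hbp]
        rw [harg, e1, e2, e3]
        simp only [hg, ← hydef, e4, e5]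
        field_simp
    rw [integral_congr_ae hae, hcv g hgmeas]
  -- conclude
  unfold luxNorm
  congr 1
  ext c
  simp only [mem_setOf_eq]
  constructor
  · rintro ⟨hc, hint⟩; exact ⟨hc, by rw [← key c hc]; exact hint⟩
  · rintro ⟨hc, hint⟩; exact ⟨hc, by rw [key c hc]; exact hint⟩
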